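/- For positive integers n ≥ r ≥ 1 and parameters y, z, q with denominators nonzero: ∑_{i=r}^n [n choose i]_q [i choose r]_q (-1)^{i-1} q^{binom(i+1,2) - in} (y;q)_i/(yz;q)_i = y^{n-r} (-1)^{r-1} q^{-binom(r,2)} · (q;q)_n (y;q)_r (z;q)_{n-r} / ((yz;q)_n (q;q)_r (q;q)_{n-r}). -/

import Mathlib

noncomputable def qPoch (q a : ℝ) (n : ℕ) : ℝ := ∏ j ∈ Finset.range n, (1 - a * q ^ j)

noncomputable def qBinom (q : ℝ) (n r : ℕ) : ℝ :=
  if r ≤ n then qPoch q q n / (qPoch q q r * qPoch q q (n - r)) else 0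

lemma even_lower (j : ℕ) : ∃ v, j * (j - 1) = 2 * v := by
  cases j with
  | zero => exact ⟨0, rfl⟩
  | succ i =>
    obtain ⟨v, hv⟩ := Nat.even_mul_succ_self i
    exact ⟨v, by rw [Nat.succ_sub_one, mul_comm, hv]; ring⟩

lemma tri' (j : ℕ) : (j + 1) * ((j + 1) - 1) / 2 = j * (j - 1) / 2 + j := by
  obtain ⟨v, hv⟩ := even_lower j
  have h : (j + 1) * ((j + 1) - 1) = j * (j - 1) + 2 * j := by
    cases j with
    | zero => rfl
    | succ i => simp only [Nat.succ_sub_one]; ring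
  rw [h, hv]; omega

lemma split1 (r j : ℕ) : (r + j) * ((r + j) + 1) / 2 = r * (r + 1) / 2 + j * (j - 1) / 2 + (j * r + j) := by
  obtain ⟨u, hu⟩ := Nat.even_mul_succ_self r
  obtain ⟨v, hv⟩ := even_lower j
  have h : (r + j) * ((r + j) + 1) = r * (r + 1) + j * (j - 1) + 2 * (j * r) + 2 * j := by
    cases j with
    | zero => simp
    | succ i => simp only [Nat.succ_sub_one]; ring
  rw [h, hu, hv]
  generalize j * r = t
  omega

lemma sqsum (r : ℕ) : r * (r + 1) / 2 + r * (r - 1) / 2 = r * r := by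
  obtain ⟨u, hu⟩ := Nat.even_mul_succ_self r
  obtain ⟨v, hv⟩ := even_lower r
  have h : r * (r + 1) + r * (r - 1) = 2 * (r * r) := by
    cases r with
    | zero => rfl
    | succ i => simp only [Nat.succ_sub_one]; ring
  rw [hu, hv]
  generalize hrr : r * r = s at h
  omega

lemma qPoch_succ (q a : ℝ) (n : ℕ) : qPoch q a (n + 1) = qPoch q a n * (1 - a * q ^ n) :=
  Finset.prod_range_succ _ _

lemma qPoch_add (q a : ℝ) (m n : ℕ) : qPoch q a (m + n) = qPoch q a m * qPoch q (a * q ^ m) n := by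
  unfold qPoch
  rw [Finset.prod_range_add]
  congr 1
  apply Finset.prod_congr rfl
  intro k _
  rw [pow_add]; ring

lemma qPoch_ne (q c : ℝ) (h : ∀ k : ℕ, 1 - c * q ^ k ≠ 0) (n : ℕ) : qPoch q c n ≠ 0 := by
  unfold qPoch
  exact Finset.prod_ne_zero_iff.mpr fun j _ => h j

lemma qPoch_q_ne_zero (q : ℝ) (hden1 : ∀ j : ℕ, 1 ≤ j → 1 - q ^ j ≠ 0) (n : ℕ) :
    qPoch q q n ≠ 0 := by
  refine qPoch_ne q q (fun k => ?_) n
  have := hden1 (k + 1) (by omega)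
  rwa [pow_succ'] at this

lemma qBinom_eq (q : ℝ) {n r : ℕ} (h : r ≤ n) :
    qBinom q n r = qPoch q q n / (qPoch q q r * qPoch q q (n - r)) := if_pos h

lemma qBinom_gt (q : ℝ) {n r : ℕ} (h : n < r) : qBinom q n r = 0 := if_neg (not_le.mpr h)

lemma qPoch_zero (q a : ℝ) : qPoch q a 0 = 1 := rfl

lemma qBinom_self (q : ℝ) (hden1 : ∀ j : ℕ, 1 ≤ j → 1 - q ^ j ≠ 0) (n : ℕ) :
    qBinom q n n = 1 := by
  rw [qBinom_eq q le_rfl, Nat.sub_self, qPoch_zero, mul_one]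
  exact div_self (qPoch_q_ne_zero q hden1 n)

lemma qBinom_zero (q : ℝ) (hden1 : ∀ j : ℕ, 1 ≤ j → 1 - q ^ j ≠ 0) (n : ℕ) :
    qBinom q n 0 = 1 := by
  rw [qBinom_eq q (Nat.zero_le n), Nat.sub_zero, qPoch_zero, one_mul]
  exact div_self (qPoch_q_ne_zero q hden1 n)

lemma qBinom_mul (q : ℝ) (hden1 : ∀ j : ℕ, 1 ≤ j → 1 - q ^ j ≠ 0) {r i n : ℕ}
    (h1 : r ≤ i) (h2 : i ≤ n) :
    qBinom q n i * qBinom q i r = qBinom q n r * qBinom q (n - r) (i - r) := by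
  rw [qBinom_eq q h2, qBinom_eq q h1, qBinom_eq q (le_trans h1 h2), qBinom_eq q (by omega : i - r ≤ n - r)]
  rw [show n - r - (i - r) = n - i by omega]
  have P := qPoch_q_ne_zero q hden1
  field_simp
  rw [div_eq_div_iff (by exact mul_ne_zero (mul_ne_zero (mul_ne_zero (P _) (P _)) (P _)) (P _))
    (by exact mul_ne_zero (mul_ne_zero (mul_ne_zero (P _) (P _)) (P _)) (P _))]
  ring

lemma one_sub_pow_ne (q : ℝ) (hden1 : ∀ j : ℕ, 1 ≤ j → 1 - q ^ j ≠ 0) (j : ℕ) :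
    1 - q * q ^ j ≠ 0 := by
  have := hden1 (j + 1) (by omega)
  rwa [pow_succ'] at this

lemma qBinom_pascal1 (q : ℝ) (hden1 : ∀ j : ℕ, 1 ≤ j → 1 - q ^ j ≠ 0) (m j : ℕ) (hj : j ≤ m) :
    qBinom q (m + 1) (j + 1) = q ^ (j + 1) * qBinom q m (j + 1) + qBinom q m j := by
  have P := qPoch_q_ne_zero q hden1
  rcases Nat.lt_or_ge j m with h | h
  · obtain ⟨d, rfl⟩ : ∃ d, m = j + 1 + d := ⟨m - (j + 1), by omega⟩
    rw [qBinom_eq q (by omega), qBinom_eq q (by omega), qBinom_eq q (by omega)]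
    rw [show j + 1 + d + 1 - (j + 1) = d + 1 by omega, show j + 1 + d - (j + 1) = d by omega,
      show j + 1 + d - j = d + 1 by omega]
    rw [show j + 1 + d + 1 = (j + 1 + d) + 1 by omega, qPoch_succ, qPoch_succ q q d,
      qPoch_succ q q j]
    have f1 := one_sub_pow_ne q hden1 j
    have f2 := one_sub_pow_ne q hden1 d
    field_simp [f1, f2, P]
    ring
  · have hjm : j = m := le_antisymm hj h
    subst hjm
    rw [qBinom_self q hden1 (j + 1), qBinom_self q hden1 j, qBinom_gt q (show j < j + 1 by omega)]
    ring

lemma qBinom_pascal2 (q : ℝ) (hden1 : ∀ j : ℕ, 1 ≤ j → 1 - q ^ j ≠ 0) (m j : ℕ) (hj : j ≤ m) :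
    qBinom q (m + 1) (j + 1) = qBinom q m (j + 1) + q ^ (m - j) * qBinom q m j := by
  have P := qPoch_q_ne_zero q hden1
  rcases Nat.lt_or_ge j m with h | h
  · obtain ⟨d, rfl⟩ : ∃ d, m = j + 1 + d := ⟨m - (j + 1), by omega⟩
    rw [qBinom_eq q (by omega), qBinom_eq q (by omega), qBinom_eq q (by omega)]
    rw [show j + 1 + d + 1 - (j + 1) = d + 1 by omega, show j + 1 + d - (j + 1) = d by omega,
      show j + 1 + d - j = d + 1 by omega]
    rw [show j + 1 + d + 1 = (j + 1 + d) + 1 by omega, qPoch_succ, qPoch_succ q q d,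
      qPoch_succ q q j]
    have f1 := one_sub_pow_ne q hden1 j
    have f2 := one_sub_pow_ne q hden1 d
    field_simp [f1, f2, P]
    ring
  · have hjm : j = m := le_antisymm hj h
    subst hjm
    rw [qBinom_self q hden1 (j + 1), qBinom_self q hden1 j, qBinom_gt q (show j < j + 1 by omega),
      Nat.sub_self]
    ring

noncomputable def Tte (q a b x : ℝ) (m j : ℕ) : ℝ :=
  qBinom q m j * ((-1) ^ j * q ^ (j * (j - 1) / 2) * x ^ j * qPoch q a j *
    ∏ k ∈ Finset.Ico j m, (1 - b * q ^ k))

noncomputable def TT (q a b x : ℝ) (m : ℕ) : ℝ := ∑ j ∈ Finset.range (m + 1), Tte q a b x m j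

lemma prod_Ico_shift (q b : ℝ) (j m : ℕ) :
    (∏ k ∈ Finset.Ico (j + 1) (m + 1), (1 - b * q ^ k)) =
      ∏ k ∈ Finset.Ico j m, (1 - (b * q) * q ^ k) := by
  rw [Finset.prod_Ico_eq_prod_range, Finset.prod_Ico_eq_prod_range,
    show m + 1 - (j + 1) = m - j by omega]
  apply Finset.prod_congr rfl
  intro i _
  rw [show j + 1 + i = (j + i) + 1 by omega, pow_succ]
  ring

lemma Tte_last (q a b x : ℝ) (m : ℕ) : Tte q a b x m (m + 1) = 0 := by
  unfold Tte
  rw [qBinom_gt q (by omega)]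
  ring

lemma sum_Tte_shift (q a b x : ℝ) (m : ℕ) :
    (∑ j ∈ Finset.range (m + 1), Tte q a b x m (j + 1)) + Tte q a b x m 0 =
      TT q a b x m := by
  rw [← Finset.sum_range_succ', Finset.sum_range_succ, Tte_last, add_zero]
  rfl

lemma Tte_split2 (q : ℝ) (hq : q ≠ 0) (hden1 : ∀ j : ℕ, 1 ≤ j → 1 - q ^ j ≠ 0)
    (a b x : ℝ) (m j : ℕ) (hj : j ≤ m) :
    Tte q a b x (m + 1) (j + 1) = (1 - b * q ^ m) * Tte q a b x m (j + 1) +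
      (-(x * q ^ m) * Tte q a (b * q) x m j + a * (x * q ^ m) * Tte q a (b * q) (q * x) m j) := by
  unfold Tte
  rw [qBinom_pascal2 q hden1 m j hj, add_mul]
  congr 1
  · rcases Nat.lt_or_ge j m with h | h
    · rw [Finset.prod_Ico_succ_top (show j + 1 ≤ m by omega)]
      ring
    · have hjm : j = m := le_antisymm hj h
      subst hjm
      rw [qBinom_gt q (by omega)]
      ring
  · rw [prod_Ico_shift q b j m, tri' j, pow_add q (j * (j - 1) / 2) j, pow_succ (-1 : ℝ) j, pow_succ x j, qPoch_succ,
      mul_pow q x j]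
    have e : q ^ (m - j) = q ^ m / q ^ j := by
      rw [eq_div_iff (pow_ne_zero j hq), ← pow_add]
      congr 1
      omega
    rw [e]
    field_simp
    ring

lemma Tte_split1 (q : ℝ) (hden1 : ∀ j : ℕ, 1 ≤ j → 1 - q ^ j ≠ 0)
    (a b x : ℝ) (m j : ℕ) (hj : j ≤ m) :
    Tte q a b x (m + 1) (j + 1) = (1 - b * q ^ m) * Tte q a b (q * x) m (j + 1) +
      (-x * Tte q a (b * q) (q * x) m j + a * x * Tte q a (b * q) ((q * q) * x) m j) := by
  unfold Tte
  rw [qBinom_pascal1 q hden1 m j hj, add_mul]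
  congr 1
  · rcases Nat.lt_or_ge j m with h | h
    · rw [Finset.prod_Ico_succ_top (show j + 1 ≤ m by omega), mul_pow q x (j + 1)]
      ring
    · have hjm : j = m := le_antisymm hj h
      subst hjm
      rw [qBinom_gt q (by omega)]
      ring
  · rw [prod_Ico_shift q b j m, tri' j, pow_add q (j * (j - 1) / 2) j, pow_succ (-1 : ℝ) j, pow_succ x j, qPoch_succ,
      mul_pow q x j, mul_pow (q * q) x j, mul_pow q q j]
    ring

lemma Tte_top0 (q : ℝ) (hden1 : ∀ j : ℕ, 1 ≤ j → 1 - q ^ j ≠ 0) (a b x x' : ℝ) (m : ℕ) :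
    Tte q a b x (m + 1) 0 = (1 - b * q ^ m) * Tte q a b x' m 0 := by
  unfold Tte
  rw [qBinom_zero q hden1, qBinom_zero q hden1, Finset.prod_Ico_succ_top (Nat.zero_le m)]
  ring

lemma TT_rec2 (q : ℝ) (hq : q ≠ 0) (hden1 : ∀ j : ℕ, 1 ≤ j → 1 - q ^ j ≠ 0)
    (a b x : ℝ) (m : ℕ) :
    TT q a b x (m + 1) = (1 - b * q ^ m) * TT q a b x m - x * q ^ m * TT q a (b * q) x m
      + a * (x * q ^ m) * TT q a (b * q) (q * x) m := by
  have hs := sum_Tte_shift q a b x m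
  simp only [TT] at hs ⊢
  rw [Finset.sum_range_succ']
  rw [Finset.sum_congr rfl
    (fun j hj => Tte_split2 q hq hden1 a b x m j (Nat.lt_succ_iff.mp (Finset.mem_range.mp hj)))]
  rw [Finset.sum_add_distrib, Finset.sum_add_distrib, ← Finset.mul_sum, ← Finset.mul_sum,
    ← Finset.mul_sum, Tte_top0 q hden1 a b x x m]
  linear_combination (1 - b * q ^ m) * hs

lemma TT_rec1 (q : ℝ) (hden1 : ∀ j : ℕ, 1 ≤ j → 1 - q ^ j ≠ 0)
    (a b x : ℝ) (m : ℕ) :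
    TT q a b x (m + 1) = (1 - b * q ^ m) * TT q a b (q * x) m - x * TT q a (b * q) (q * x) m
      + a * x * TT q a (b * q) ((q * q) * x) m := by
  have hs := sum_Tte_shift q a b (q * x) m
  simp only [TT] at hs ⊢
  rw [Finset.sum_range_succ']
  rw [Finset.sum_congr rfl
    (fun j hj => Tte_split1 q hden1 a b x m j (Nat.lt_succ_iff.mp (Finset.mem_range.mp hj)))]
  rw [Finset.sum_add_distrib, Finset.sum_add_distrib, ← Finset.mul_sum, ← Finset.mul_sum,
    ← Finset.mul_sum, Tte_top0 q hden1 a b x (q * x) m]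
  linear_combination (1 - b * q ^ m) * hs

lemma TT_zero (q a b x : ℝ) : TT q a b x 0 = 1 := by
  simp [TT, Tte, qBinom, qPoch]

lemma prod_q_mul (q a b : ℝ) (m : ℕ) :
    (∏ k ∈ Finset.range m, (q * a - b * q * q ^ k)) =
      q ^ m * ∏ k ∈ Finset.range m, (a - b * q ^ k) := by
  calc (∏ k ∈ Finset.range m, (q * a - b * q * q ^ k))
      = ∏ k ∈ Finset.range m, (q * (a - b * q ^ k)) := by
        apply Finset.prod_congr rfl; intro k _; ring
    _ = q ^ m * ∏ k ∈ Finset.range m, (a - b * q ^ k) := by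
        rw [Finset.prod_mul_distrib, Finset.prod_const, Finset.card_range]

lemma prod_shift_mul (q a b : ℝ) (m : ℕ) :
    (∏ k ∈ Finset.range m, (q * a - b * q ^ (k + 1))) =
      q ^ m * ∏ k ∈ Finset.range m, (a - b * q ^ k) := by
  calc (∏ k ∈ Finset.range m, (q * a - b * q ^ (k + 1)))
      = ∏ k ∈ Finset.range m, (q * (a - b * q ^ k)) := by
        apply Finset.prod_congr rfl; intro k _; rw [pow_succ]; ring
    _ = q ^ m * ∏ k ∈ Finset.range m, (a - b * q ^ k) := by
        rw [Finset.prod_mul_distrib, Finset.prod_const, Finset.card_range]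

lemma key (q : ℝ) (hq : q ≠ 0) (hden1 : ∀ j : ℕ, 1 ≤ j → 1 - q ^ j ≠ 0) (m : ℕ) :
    ∀ a b : ℝ,
    TT q a b (q ^ ((1 : ℤ) - (m : ℤ))) m = (∏ k ∈ Finset.range m, (a - b * q ^ k)) ∧
    a * TT q a b (q ^ ((2 : ℤ) - (m : ℤ))) m =
      (a - 1) * (∏ k ∈ Finset.range m, (q * a - b * q ^ k)) +
        ∏ k ∈ Finset.range m, (a - b * q ^ k) := by
  induction m with
  | zero =>
    intro a b
    constructor
    · simp [TT_zero]
    · simp [TT_zero]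
  | succ m ih =>
    intro a b
    have ih1 := fun a b => (ih a b).1
    have ih2 := fun a b => (ih a b).2
    have hq1 : q * q ^ (-(m : ℤ)) = q ^ ((1 : ℤ) - (m : ℤ)) := by
      rw [sub_eq_add_neg, zpow_add₀ hq, zpow_one]
    have hq2 : q * q * q ^ (-(m : ℤ)) = q ^ ((2 : ℤ) - (m : ℤ)) := by
      rw [show (2 : ℤ) - (m : ℤ) = 1 + ((1 : ℤ) - (m : ℤ)) by ring, zpow_add₀ hq, zpow_one, ← hq1]
      ring
    have hq3 : q * q ^ ((1 : ℤ) - (m : ℤ)) = q ^ ((2 : ℤ) - (m : ℤ)) := by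
      rw [show (2 : ℤ) - (m : ℤ) = 1 + ((1 : ℤ) - (m : ℤ)) by ring, zpow_add₀ hq, zpow_one]
    have hqm : q ^ (-(m : ℤ)) * q ^ m = 1 := by
      rw [← zpow_natCast q m, ← zpow_add₀ hq]
      simp
    have hx : q ^ ((1 : ℤ) - (m : ℤ)) * q ^ m = q := by
      rw [← zpow_natCast q m, ← zpow_add₀ hq]
      simp
    constructor
    · push_cast
      rw [show (1 : ℤ) - ((m : ℤ) + 1) = -(m : ℤ) by ring]
      rw [TT_rec1 q hden1 a b _ m, hq1, hq2]
      rw [ih1 a b, ih1 a (b * q)]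
      have ih2' := ih2 a (b * q)
      rw [prod_q_mul q a b m] at ih2'
      rw [Finset.prod_range_succ]
      linear_combination q ^ (-(m : ℤ)) * ih2' +
        (a - 1) * (∏ k ∈ Finset.range m, (a - b * q ^ k)) * hqm
    · push_cast
      rw [show (2 : ℤ) - ((m : ℤ) + 1) = (1 : ℤ) - (m : ℤ) by ring]
      rw [TT_rec2 q hq hden1 a b _ m, hx, hq3]
      rw [ih1 a b, ih1 a (b * q)]
      have ih2' := ih2 a (b * q)
      rw [prod_q_mul q a b m] at ih2'
      rw [Finset.prod_range_succ', Finset.prod_range_succ, prod_shift_mul q a b m]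
      linear_combination a * q * ih2'

lemma qPoch_mul_Ico (q b : ℝ) {j m : ℕ} (hj : j ≤ m) :
    qPoch q b j * ∏ k ∈ Finset.Ico j m, (1 - b * q ^ k) = qPoch q b m := by
  unfold qPoch
  rw [Finset.range_eq_Ico, Finset.range_eq_Ico]
  exact Finset.prod_Ico_consecutive (fun k => 1 - b * q ^ k) (Nat.zero_le j) hj

/-- Corollary 3.4. -/
theorem cor34 (q y z : ℝ) (n r : ℕ) (hr : 1 ≤ r) (hrn : r ≤ n) (hq : q ≠ 0)
    (hden1 : ∀ j : ℕ, 1 ≤ j → 1 - q ^ j ≠ 0)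
    (hden2 : ∀ j : ℕ, 0 ≤ j → 1 - y * z * q ^ j ≠ 0) :
    (∑ i ∈ Finset.Icc r n,
        qBinom q n i * qBinom q i r * (-1) ^ (i - 1) *
          q ^ (((i * (i + 1) / 2 : ℕ) : ℤ) - (i : ℤ) * n) * (qPoch q y i / qPoch q (y * z) i)) =
      y ^ (n - r) * (-1) ^ (r - 1) * q ^ (-((r * (r - 1) / 2 : ℕ) : ℤ)) *
        (qPoch q q n * qPoch q y r * qPoch q z (n - r) /
          (qPoch q (y * z) n * qPoch q q r * qPoch q q (n - r))) := by
  obtain ⟨m, rfl⟩ : ∃ m, n = r + m := ⟨n - r, by omega⟩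
  have P := qPoch_q_ne_zero q hden1
  have hyz : ∀ k : ℕ, qPoch q (y * z) k ≠ 0 :=
    qPoch_ne q (y * z) (fun k => hden2 k (Nat.zero_le k))
  have hyzq : ∀ s k : ℕ, qPoch q (y * z * q ^ s) k ≠ 0 := fun s k =>
    qPoch_ne q _ (fun t => by
      have := hden2 (s + t) (Nat.zero_le _)
      rwa [pow_add, ← mul_assoc] at this) k
  simp only [show r + m - r = m from by omega]
  rw [show Finset.Icc r (r + m) = Finset.Ico r (r + m + 1) from by rw [Finset.Ico_add_one_right_eq_Icc],
    Finset.sum_Ico_eq_sum_range, show r + m + 1 - r = m + 1 from by omega]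
  set D : ℤ := ((r * (r + 1) / 2 : ℕ) : ℤ) - (r : ℤ) * ((r + m : ℕ) : ℤ) with hD
  have hterm : ∀ j ∈ Finset.range (m + 1),
      qBinom q (r + m) (r + j) * qBinom q (r + j) r * (-1) ^ (r + j - 1) *
        q ^ ((((r + j) * (r + j + 1) / 2 : ℕ) : ℤ) - ((r + j : ℕ) : ℤ) * ((r + m : ℕ) : ℤ)) *
        (qPoch q y (r + j) / qPoch q (y * z) (r + j)) =
      (qBinom q (r + m) r * ((-1) ^ (r - 1) * q ^ D * qPoch q y r /
        (qPoch q (y * z) r * qPoch q (y * z * q ^ r) m))) *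
        Tte q (y * q ^ r) (y * z * q ^ r) (q ^ ((1 : ℤ) - (m : ℤ))) m j := by
    intro j hj
    have hjm : j ≤ m := Nat.lt_succ_iff.mp (Finset.mem_range.mp hj)
    rw [qBinom_mul q hden1 (show r ≤ r + j by omega) (show r + j ≤ r + m by omega)]
    rw [show r + m - r = m from by omega, show r + j - r = j from by omega]
    rw [show r + j - 1 = (r - 1) + j from by omega, pow_add]
    rw [qPoch_add q y r j, qPoch_add q (y * z) r j]
    have eexp : ((((r + j) * (r + j + 1) / 2 : ℕ) : ℤ) - ((r + j : ℕ) : ℤ) * ((r + m : ℕ) : ℤ))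
        = D + ((j * (j - 1) / 2 : ℕ) : ℤ) + ((1 : ℤ) - (m : ℤ)) * (j : ℤ) := by
      rw [show (r + j) * (r + j + 1) / 2 = r * (r + 1) / 2 + j * (j - 1) / 2 + (j * r + j) from
        split1 r j, hD]
      push_cast
      ring
    rw [eexp, zpow_add₀ hq, zpow_add₀ hq, zpow_natCast, zpow_mul, zpow_natCast]
    unfold Tte
    rw [← qPoch_mul_Ico q (y * z * q ^ r) hjm]
    have hIco : (∏ k ∈ Finset.Ico j m, (1 - y * z * q ^ r * q ^ k)) ≠ 0 :=
      Finset.prod_ne_zero_iff.mpr (fun k _ => by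
        have := hden2 (r + k) (Nat.zero_le _)
        rwa [pow_add, ← mul_assoc] at this)
    have h1 := hyz r
    have h2 := hyzq r j
    field_simp
    have hP' : (∏ x ∈ Finset.Ico j m, (1 - y * q ^ r * z * q ^ x)) ≠ 0 :=
      Finset.prod_ne_zero_iff.mpr (fun k _ => by
        have := hden2 (r + k) (Nat.zero_le _)
        rw [show y * q ^ r * z * q ^ k = y * z * q ^ (r + k) by rw [pow_add]; ring]
        exact this)
    rw [mul_div_mul_right _ _ hP']
  rw [Finset.sum_congr rfl hterm, ← Finset.mul_sum]
  have hTT : (∑ j ∈ Finset.range (m + 1),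
      Tte q (y * q ^ r) (y * z * q ^ r) (q ^ ((1 : ℤ) - (m : ℤ))) m j) =
      TT q (y * q ^ r) (y * z * q ^ r) (q ^ ((1 : ℤ) - (m : ℤ))) m := rfl
  rw [hTT, (key q hq hden1 m (y * q ^ r) (y * z * q ^ r)).1]
  have hprod : (∏ k ∈ Finset.range m, (y * q ^ r - y * z * q ^ r * q ^ k)) =
      y ^ m * q ^ (r * m) * qPoch q z m := by
    calc (∏ k ∈ Finset.range m, (y * q ^ r - y * z * q ^ r * q ^ k))
        = ∏ k ∈ Finset.range m, ((y * q ^ r) * (1 - z * q ^ k)) := by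
          apply Finset.prod_congr rfl; intro k _; ring
      _ = (y * q ^ r) ^ m * qPoch q z m := by
          rw [Finset.prod_mul_distrib, Finset.prod_const, Finset.card_range]; rfl
      _ = y ^ m * q ^ (r * m) * qPoch q z m := by rw [mul_pow, ← pow_mul]
  rw [hprod]
  have hE : q ^ D * q ^ (r * m) = q ^ (-((r * (r - 1) / 2 : ℕ) : ℤ)) := by
    rw [← zpow_natCast q (r * m), ← zpow_add₀ hq]
    congr 1
    have hs' : ((r * (r + 1) / 2 : ℕ) : ℤ) + ((r * (r - 1) / 2 : ℕ) : ℤ) = (r : ℤ) * (r : ℤ) := by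
      exact_mod_cast congrArg (Nat.cast : ℕ → ℤ) (sqsum r)
    rw [hD, Nat.cast_add, Nat.cast_mul]
    linear_combination hs'
  rw [qBinom_eq q (show r ≤ r + m by omega), show r + m - r = m from by omega,
    qPoch_add q (y * z) r m, ← hE]
  have h1 := hyz r
  have h2 := hyzq r m
  have h3 := P r
  have h4 := P m
  have h5 := P (r + m)
  generalize q ^ D = Qd
  field_simp
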